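/- arXiv:2602.12190 — 4 statements merged into one kernel-verified Lean document; each statement's English description precedes it below -/
import Mathlib

section
/- For all real h, h·tanh(h) − log(cosh(h)) ≤ 2·tanh(h)². -/
open Real

lemma key (h : ℝ) (hh : 0 ≤ h) :
    h * Real.tanh h - Real.log (Real.cosh h) ≤ 2 * (Real.tanh h) ^ 2 := by
  rcases le_or_gt h 1 with h1 | h1
  · -- small case: log cosh ≥ 0 and h ≤ 2 tanh h
    have hc1 : (1:ℝ) ≤ Real.cosh h := Real.one_le_cosh h
    have hlog : 0 ≤ Real.log (Real.cosh h) := Real.log_nonneg hc1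
    have hs : h ≤ Real.sinh h := Real.self_le_sinh_iff.mpr hh
    have hcosh2 : Real.cosh h ≤ 2 := by
      rw [Real.cosh_eq]
      have e1 : Real.exp h ≤ Real.exp 1 := Real.exp_le_exp.mpr h1
      have e2 : Real.exp 1 < 2.7182818286 := Real.exp_one_lt_d9
      have e3 : Real.exp (-h) ≤ 1 := Real.exp_le_one_iff.mpr (by linarith)
      linarith
    have htanh : h ≤ 2 * Real.tanh h := by
      rw [Real.tanh_eq_sinh_div_cosh, mul_div_assoc', le_div_iff₀ (Real.cosh_pos h)]
      nlinarith [Real.cosh_pos h, Real.sinh_nonneg_iff.mpr hh]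
    have ht0 : 0 ≤ Real.tanh h := by
      rw [Real.tanh_eq_sinh_div_cosh]
      exact div_nonneg (Real.sinh_nonneg_iff.mpr hh) (Real.cosh_pos h).le
    nlinarith
  · -- large case: LHS ≤ log 2 ≤ 2 tanh² h
    have ht1 : Real.tanh h ≤ 1 := by
      rw [Real.tanh_eq_sinh_div_cosh, div_le_one (Real.cosh_pos h), Real.sinh_eq, Real.cosh_eq]
      have := Real.exp_pos (-h)
      linarith
    have hlog : h - Real.log 2 ≤ Real.log (Real.cosh h) := by
      have : Real.exp h / 2 ≤ Real.cosh h := by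
        rw [Real.cosh_eq]
        have : 0 < Real.exp (-h) := Real.exp_pos _
        linarith
      calc h - Real.log 2 = Real.log (Real.exp h / 2) := by
            rw [Real.log_div (Real.exp_pos h).ne' two_ne_zero, Real.log_exp]
        _ ≤ Real.log (Real.cosh h) :=
            Real.log_le_log (by positivity) this
    have hLHS : h * Real.tanh h - Real.log (Real.cosh h) ≤ Real.log 2 := by
      nlinarith
    have hRHS : Real.log 2 ≤ 2 * (Real.tanh h) ^ 2 := by
      have e1 : (2.7182818283 : ℝ) < Real.exp 1 := Real.exp_one_gt_d9
      have eh : Real.exp 1 ≤ Real.exp h := Real.exp_le_exp.mpr h1.le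
      have ha : (2.7182818283 : ℝ) < Real.exp h := lt_of_lt_of_le e1 eh
      have hinv : Real.exp (-h) = (Real.exp h)⁻¹ := Real.exp_neg h
      have hpos : 0 < Real.exp h := Real.exp_pos h
      have hl2 : Real.log 2 < 0.6931471808 := Real.log_two_lt_d9
      have htanh : Real.tanh h = (Real.exp h ^ 2 - 1) / (Real.exp h ^ 2 + 1) := by
        rw [Real.tanh_eq_sinh_div_cosh, Real.sinh_eq, Real.cosh_eq, hinv]
        field_simp
      rw [htanh, div_pow, ← mul_div_assoc, le_div_iff₀ (by positivity)]
      nlinarith [sq_nonneg (Real.exp h ^ 2 - 8), sq_nonneg (Real.exp h)]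
    linarith

theorem stmt_0 (h : ℝ) :
    h * Real.tanh h - Real.log (Real.cosh h) ≤ 2 * (Real.tanh h) ^ 2 := by
  rcases le_or_gt 0 h with hh | hh
  · exact key h hh
  · have := key (-h) (by linarith)
    simpa [Real.tanh_neg, Real.cosh_neg, mul_comm] using this
end

section
/- There exists a constant C > 0 such that for all real x and y, |log(cosh(x+y)) − log(cosh x) − log(cosh y) − x·y| ≤ C(x²y² + x⁴ + y⁴). -/
open Real

lemma aux_nonneg_of_deriv (f f' : ℝ → ℝ) (hd : ∀ t, HasDerivAt f (f' t) t)
    (h0 : f 0 = 0) (hf' : ∀ t, 0 ≤ t → 0 ≤ f' t) : ∀ t, 0 ≤ t → 0 ≤ f t := by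
  intro t ht
  have hmono : MonotoneOn f (Set.Ici (0:ℝ)) := by
    apply monotoneOn_of_deriv_nonneg (convex_Ici 0)
      (fun x _ => (hd x).continuousAt.continuousWithinAt)
      (fun x hx => (hd x).differentiableAt.differentiableWithinAt)
    intro x hx
    rw [(hd x).deriv]
    exact hf' x (le_of_lt (by simpa using hx))
  have := hmono (Set.self_mem_Ici) (Set.mem_Ici.mpr ht) ht
  simpa [h0] using this

lemma aux_tanh_deriv (t : ℝ) : HasDerivAt Real.tanh (1 - Real.tanh t ^ 2) t := by
  have h : HasDerivAt (fun s => Real.sinh s / Real.cosh s)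
      ((Real.cosh t * Real.cosh t - Real.sinh t * Real.sinh t) / Real.cosh t ^ 2) t :=
    (Real.hasDerivAt_sinh t).div (Real.hasDerivAt_cosh t) (Real.cosh_pos t).ne'
  have heq : (Real.cosh t * Real.cosh t - Real.sinh t * Real.sinh t) / Real.cosh t ^ 2
      = 1 - Real.tanh t ^ 2 := by
    have h1 : Real.cosh t ^ 2 - Real.sinh t ^ 2 = 1 := Real.cosh_sq_sub_sinh_sq t
    have hc := (Real.cosh_pos t).ne'
    rw [Real.tanh_eq_sinh_div_cosh]
    field_simp
  have := heq ▸ h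
  exact this.congr_of_eventuallyEq (by filter_upwards with s; rw [Real.tanh_eq_sinh_div_cosh])

lemma aux_tanh_le (t : ℝ) (ht : 0 ≤ t) : Real.tanh t ≤ t := by
  have := aux_nonneg_of_deriv (fun s => s - Real.tanh s) (fun s => Real.tanh s ^ 2)
    (fun s => ((hasDerivAt_id' s).sub (aux_tanh_deriv s)).congr_deriv (by ring))
    (by simp [Real.tanh_zero]) (fun s _ => sq_nonneg _) t ht
  have h : (0:ℝ) ≤ t - Real.tanh t := this
  linarith

lemma aux_tanh_nonneg (t : ℝ) (ht : 0 ≤ t) : 0 ≤ Real.tanh t := by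
  rw [Real.tanh_eq_sinh_div_cosh]
  exact div_nonneg (Real.sinh_nonneg_iff.mpr ht) (Real.cosh_pos t).le

lemma aux_tanh_lower (t : ℝ) (ht : 0 ≤ t) : t - t ^ 3 / 3 ≤ Real.tanh t := by
  have := aux_nonneg_of_deriv (fun s => Real.tanh s - s + s ^ 3 / 3)
    (fun s => s ^ 2 - Real.tanh s ^ 2)
    (fun s => by
      have h1 := (aux_tanh_deriv s).sub (hasDerivAt_id s)
      have h2 : HasDerivAt (fun u : ℝ => u ^ 3 / 3) (s ^ 2) s := by
        have := (hasDerivAt_pow 3 s).div_const 3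
        simpa using this.congr_deriv (by ring)
      have := h1.add h2
      exact this.congr_deriv (by ring))
    (by simp [Real.tanh_zero]) (fun s hs => by
      show (0:ℝ) ≤ s ^ 2 - Real.tanh s ^ 2
      have h1 := aux_tanh_le s hs
      have h2 := aux_tanh_nonneg s hs
      nlinarith) t ht
  have h : (0:ℝ) ≤ Real.tanh t - t + t ^ 3 / 3 := this
  linarith

lemma aux_logcosh_deriv (t : ℝ) : HasDerivAt (fun s => Real.log (Real.cosh s)) (Real.tanh t) t := by
  have := (Real.hasDerivAt_cosh t).log (Real.cosh_pos t).ne'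
  simpa [Real.tanh_eq_sinh_div_cosh] using this

lemma aux_g_bounds (t : ℝ) : 0 ≤ t ^ 2 / 2 - Real.log (Real.cosh t) ∧
    t ^ 2 / 2 - Real.log (Real.cosh t) ≤ t ^ 4 / 12 := by
  -- reduce to |t|
  have key : ∀ s : ℝ, 0 ≤ s → 0 ≤ s ^ 2 / 2 - Real.log (Real.cosh s) ∧
      s ^ 2 / 2 - Real.log (Real.cosh s) ≤ s ^ 4 / 12 := by
    intro s hs
    constructor
    · exact aux_nonneg_of_deriv (fun u => u ^ 2 / 2 - Real.log (Real.cosh u))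
        (fun u => u - Real.tanh u)
        (fun u => by
          have h1 : HasDerivAt (fun v : ℝ => v ^ 2 / 2) u u := by
            have := (hasDerivAt_pow 2 u).div_const 2
            simpa using this.congr_deriv (by ring)
          exact (h1.sub (aux_logcosh_deriv u)))
        (by simp) (fun u hu => by
          show (0:ℝ) ≤ u - Real.tanh u
          linarith [aux_tanh_le u hu]) s hs
    · have := aux_nonneg_of_deriv
        (fun u => u ^ 4 / 12 - (u ^ 2 / 2 - Real.log (Real.cosh u)))
        (fun u => u ^ 3 / 3 - (u - Real.tanh u))
        (fun u => by
          have h4 : HasDerivAt (fun v : ℝ => v ^ 4 / 12) (u ^ 3 / 3) u := by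
            have := (hasDerivAt_pow 4 u).div_const 12
            simpa using this.congr_deriv (by ring)
          have h2 : HasDerivAt (fun v : ℝ => v ^ 2 / 2) u u := by
            have := (hasDerivAt_pow 2 u).div_const 2
            simpa using this.congr_deriv (by ring)
          exact h4.sub (h2.sub (aux_logcosh_deriv u)))
        (by simp) (fun u hu => by
          show (0:ℝ) ≤ u ^ 3 / 3 - (u - Real.tanh u)
          linarith [aux_tanh_lower u hu]) s hs
      have h : (0:ℝ) ≤ s ^ 4 / 12 - (s ^ 2 / 2 - Real.log (Real.cosh s)) := this
      linarith
  rcases le_total 0 t with ht | ht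
  · exact key t ht
  · have := key (-t) (by linarith)
    simpa [Real.cosh_neg, show ((-t):ℝ) ^ 4 = t ^ 4 by ring] using this

theorem stmt_10 :
    ∃ C > (0 : ℝ), ∀ x y : ℝ,
      |Real.log (Real.cosh (x + y)) - Real.log (Real.cosh x) - Real.log (Real.cosh y)
        - x * y| ≤ C * (x ^ 2 * y ^ 2 + x ^ 4 + y ^ 4) := by
  refine ⟨1, one_pos, fun x y => ?_⟩
  obtain ⟨hxy1, hxy2⟩ := aux_g_bounds (x + y)
  obtain ⟨hx1, hx2⟩ := aux_g_bounds x
  obtain ⟨hy1, hy2⟩ := aux_g_bounds y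
  rw [abs_le]
  constructor <;> nlinarith [sq_nonneg (x - y), sq_nonneg (x + y), sq_nonneg (x^2 - y^2), sq_nonneg (x*y), sq_nonneg x, sq_nonneg y]
end

section
/- For every integer p ≥ 1 and real numbers x_1,…,x_p, one has log(cosh(Σ_a x_a)) − Σ_a log(cosh(x_a)) ≤ ((p−1)/2)·Σ_{a=1}^p x_a². -/
lemma sinh_le_mul_cosh {u : ℝ} (hu : 0 ≤ u) : Real.sinh u ≤ u * Real.cosh u := by
  have hmono : MonotoneOn (fun w : ℝ => w * Real.cosh w - Real.sinh w) (Set.Ici 0) := by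
    apply monotoneOn_of_deriv_nonneg (convex_Ici 0)
    · fun_prop
    · intro v hv
      exact ((((hasDerivAt_id v).mul (Real.hasDerivAt_cosh v)).sub
        (Real.hasDerivAt_sinh v)).differentiableAt).differentiableWithinAt
    · intro v hv
      have hd : deriv (fun w : ℝ => w * Real.cosh w - Real.sinh w) v = v * Real.sinh v := by
        have := (((hasDerivAt_id v).mul (Real.hasDerivAt_cosh v)).sub
          (Real.hasDerivAt_sinh v)).deriv
        simp only [id] at this
        rw [show (fun w : ℝ => w * Real.cosh w - Real.sinh w) = id * Real.cosh - Real.sinh from rfl, this]; ring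
      rw [hd]
      have hv' : 0 ≤ v := le_of_lt (by simpa using hv)
      exact mul_nonneg hv' (by rwa [← Real.sinh_zero, Real.sinh_le_sinh])
  have := hmono (Set.self_mem_Ici) (Set.mem_Ici.mpr hu) hu
  simpa using this

lemma log_cosh_add_le (s t : ℝ) :
    Real.log (Real.cosh (s + t)) ≤
      Real.log (Real.cosh s) + Real.log (Real.cosh t) + |s| * |t| := by
  have h1 : Real.cosh (s + t) ≤ Real.cosh s * Real.cosh t * Real.exp (|s| * |t|) := by
    rw [Real.cosh_add]
    have h2 : Real.sinh s * Real.sinh t ≤ |s| * |t| * (Real.cosh s * Real.cosh t) := by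
      calc Real.sinh s * Real.sinh t ≤ |Real.sinh s * Real.sinh t| := le_abs_self _
        _ = Real.sinh |s| * Real.sinh |t| := by
            rw [abs_mul, Real.abs_sinh, Real.abs_sinh]
        _ ≤ (|s| * Real.cosh |s|) * (|t| * Real.cosh |t|) := by
            apply mul_le_mul (sinh_le_mul_cosh (abs_nonneg s)) (sinh_le_mul_cosh (abs_nonneg t))
            · rw [← Real.sinh_zero, Real.sinh_le_sinh]; exact abs_nonneg t
            · positivity
        _ = |s| * |t| * (Real.cosh s * Real.cosh t) := by
            rw [Real.cosh_abs, Real.cosh_abs]; ring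
    have h3 : (1 : ℝ) + |s| * |t| ≤ Real.exp (|s| * |t|) := by
      have := Real.add_one_le_exp (|s| * |t|); linarith
    have hpos : 0 < Real.cosh s * Real.cosh t := by positivity
    nlinarith [h2, h3, hpos]
  calc Real.log (Real.cosh (s + t)) ≤
      Real.log (Real.cosh s * Real.cosh t * Real.exp (|s| * |t|)) :=
        Real.log_le_log (Real.cosh_pos _) h1
    _ = Real.log (Real.cosh s) + Real.log (Real.cosh t) + |s| * |t| := by
        rw [Real.log_mul (by positivity) (by positivity),
          Real.log_mul (ne_of_gt (Real.cosh_pos _)) (ne_of_gt (Real.cosh_pos _)), Real.log_exp]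

lemma log_cosh_sum_le (n : ℕ) (x : Fin n → ℝ) :
    Real.log (Real.cosh (∑ a, x a)) ≤
      ∑ a, Real.log (Real.cosh (x a)) + ((∑ a, |x a|) ^ 2 - ∑ a, (x a) ^ 2) / 2 := by
  induction n with
  | zero => simp
  | succ n ih =>
    rw [Fin.sum_univ_castSucc (f := x), Fin.sum_univ_castSucc (f := fun a => Real.log (Real.cosh (x a))),
      Fin.sum_univ_castSucc (f := fun a => |x a|), Fin.sum_univ_castSucc (f := fun a => (x a) ^ 2)]
    set S := ∑ a : Fin n, x (Fin.castSucc a)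
    set t := x (Fin.last n)
    set A := ∑ a : Fin n, |x (Fin.castSucc a)|
    set Q := ∑ a : Fin n, (x (Fin.castSucc a)) ^ 2
    have hSA : |S| ≤ A := Finset.abs_sum_le_sum_abs _ _
    have h1 := log_cosh_add_le S t
    have h2 := ih (fun a => x (Fin.castSucc a))
    have ht : 0 ≤ |t| := abs_nonneg t
    have hAt : |S| * |t| ≤ A * |t| := mul_le_mul_of_nonneg_right hSA ht
    have hsq : t ^ 2 = |t| ^ 2 := (sq_abs t).symm
    nlinarith [h1, h2, hAt]

theorem stmt_12 (p : ℕ) (hp : 1 ≤ p) (x : Fin p → ℝ) :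
    Real.log (Real.cosh (∑ a, x a)) - ∑ a, Real.log (Real.cosh (x a))
      ≤ ((p : ℝ) - 1) / 2 * ∑ a, (x a) ^ 2 := by
  have h1 := log_cosh_sum_le p x
  have h2 : (∑ a, |x a|) ^ 2 ≤ (p : ℝ) * ∑ a, (x a) ^ 2 := by
    have := sq_sum_le_card_mul_sum_sq (s := (Finset.univ : Finset (Fin p))) (f := fun a => |x a|)
    simpa [sq_abs] using this
  linarith
end

section
/- For fixed λ > 0, the total variation distance between the Gaussian measures N(0, I_M) and N(0, (1+λ)I_M) on ℝ^M converges to 1 as M → ∞. -/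
open MeasureTheory ProbabilityTheory Real
open scoped NNReal ENNReal

set_option maxHeartbeats 2000000

lemma aux_density_eq (v : ℝ≥0) (c : ℝ) (x : ℝ) :
    gaussianPDFReal 0 v x * Real.exp (c * x ^ 2)
      = (Real.sqrt (2 * π * v))⁻¹ * Real.exp (-((2 * (v:ℝ))⁻¹ - c) * x ^ 2) := by
  rw [gaussianPDFReal_def]
  simp only [sub_zero]
  rw [mul_assoc, ← Real.exp_add]
  congr 2
  rw [div_eq_mul_inv]
  ring

lemma gaussianReal_eq_withDensity (v : ℝ≥0) (hv : v ≠ 0) :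
    gaussianReal 0 v
      = volume.withDensity fun x => ((gaussianPDFReal 0 v x).toNNReal : ℝ≥0∞) :=
  gaussianReal_of_var_ne_zero 0 hv

lemma gaussian_b_pos (v : ℝ≥0) (hv : v ≠ 0) (c : ℝ) (hc : 2 * (v:ℝ) * c < 1) :
    0 < (2 * (v:ℝ))⁻¹ - c := by
  have hvpos : (0:ℝ) < v := NNReal.coe_pos.mpr (pos_iff_ne_zero.mpr hv)
  have h : (2*(v:ℝ)) * ((2*(v:ℝ))⁻¹ - c) = 1 - 2*(v:ℝ)*c := by field_simp
  nlinarith [h, hvpos, hc]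

lemma gaussian_mgf_integrable (v : ℝ≥0) (hv : v ≠ 0) (c : ℝ) (hc : 2 * (v:ℝ) * c < 1) :
    Integrable (fun x => Real.exp (c * x ^ 2)) (gaussianReal 0 v) := by
  have hb := gaussian_b_pos v hv c hc
  have hmeas : Measurable fun x => (gaussianPDFReal 0 v x).toNNReal :=
    (measurable_gaussianPDFReal 0 v).real_toNNReal
  rw [gaussianReal_eq_withDensity v hv,
    integrable_withDensity_iff_integrable_smul hmeas]
  refine ((integrable_exp_neg_mul_sq hb).const_mul ((Real.sqrt (2 * π * v))⁻¹)).congr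
    (Filter.Eventually.of_forall fun x => ?_)
  simp only []
  rw [NNReal.smul_def, Real.coe_toNNReal _ (gaussianPDFReal_nonneg 0 v x), smul_eq_mul,
    ← aux_density_eq]

lemma gaussian_mgf_integral (v : ℝ≥0) (hv : v ≠ 0) (c : ℝ) (hc : 2 * (v:ℝ) * c < 1) :
    ∫ x, Real.exp (c * x ^ 2) ∂(gaussianReal 0 v)
      = (Real.sqrt (1 - 2 * (v:ℝ) * c))⁻¹ := by
  have hvpos : (0:ℝ) < v := NNReal.coe_pos.mpr (pos_iff_ne_zero.mpr hv)
  have hb := gaussian_b_pos v hv c hc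
  set b : ℝ := (2 * (v:ℝ))⁻¹ - c with hbdef
  have hmeas : Measurable fun x => (gaussianPDFReal 0 v x).toNNReal :=
    (measurable_gaussianPDFReal 0 v).real_toNNReal
  rw [gaussianReal_eq_withDensity v hv, integral_withDensity_eq_integral_smul hmeas]
  have heq : ∀ x : ℝ, (gaussianPDFReal 0 v x).toNNReal • Real.exp (c * x ^ 2)
      = (Real.sqrt (2 * π * v))⁻¹ * Real.exp (-b * x ^ 2) := by
    intro x
    rw [NNReal.smul_def, Real.coe_toNNReal _ (gaussianPDFReal_nonneg 0 v x), smul_eq_mul,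
      aux_density_eq]
  simp only [heq]
  rw [integral_const_mul, integral_gaussian]
  have h1 : (1:ℝ) - 2 * v * c = (2 * v) * b := by rw [hbdef]; field_simp
  have hπb : (0:ℝ) < π / b := by positivity
  rw [h1, ← Real.sqrt_inv, ← Real.sqrt_inv, ← Real.sqrt_mul (by positivity)]
  congr 1
  have hπ : (0:ℝ) < π := pi_pos
  field_simp

lemma pi_integral_pow {E : Type*} [MeasurableSpace E] (μ : Measure E) [SigmaFinite μ]
    (f : E → ℝ) (M : ℕ) :
    ∫ x : Fin M → E, ∏ i, f (x i) ∂(Measure.pi fun _ => μ) = (∫ x, f x ∂μ) ^ M := by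
  letI : MeasureSpace E := { volume := μ }
  haveI : SigmaFinite (volume : Measure E) := ‹_›
  simpa using MeasureTheory.integral_fintype_prod_eq_pow (ι := Fin M) f (μ := μ)

lemma pi_integrable_prod {E : Type*} [MeasurableSpace E] (μ : Measure E) [SigmaFinite μ]
    {f : E → ℝ} (hf : Integrable f μ) (M : ℕ) :
    Integrable (fun x : Fin M → E => ∏ i, f (x i)) (Measure.pi fun _ => μ) := by
  letI : MeasureSpace E := { volume := μ }
  haveI : SigmaFinite (volume : Measure E) := ‹_›
  exact MeasureTheory.Integrable.fintype_prod (f := fun _ => f) fun _ => hf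

lemma gaussian_chernoff (v : ℝ≥0) (hv : v ≠ 0) (c r : ℝ) (hc : 2 * (v:ℝ) * c < 1) (M : ℕ) :
    ((Measure.pi fun _ : Fin M => gaussianReal 0 v)
        {x | r ≤ c * ∑ i, (x i) ^ 2}).toReal
      ≤ Real.exp (-r) * ((Real.sqrt (1 - 2 * (v:ℝ) * c))⁻¹) ^ M := by
  set P := Measure.pi fun _ : Fin M => gaussianReal 0 v with hP
  set f : (Fin M → ℝ) → ℝ := fun x => ∏ i, Real.exp (c * (x i) ^ 2) with hfdef
  have hf : ∀ x, f x = Real.exp (c * ∑ i, (x i) ^ 2) := by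
    intro x
    rw [hfdef, Finset.mul_sum, Real.exp_sum]
  have hint : Integrable f P :=
    pi_integrable_prod _ (gaussian_mgf_integrable v hv c hc) M
  have hnonneg : 0 ≤ᵐ[P] f :=
    Filter.Eventually.of_forall fun x => Finset.prod_nonneg fun i _ => (Real.exp_pos _).le
  have markov := mul_meas_ge_le_integral_of_nonneg hnonneg hint (Real.exp r)
  have hsub : {x : Fin M → ℝ | r ≤ c * ∑ i, (x i) ^ 2} ⊆ {x | Real.exp r ≤ f x} := by
    intro x hx
    rw [Set.mem_setOf_eq, hf]
    exact Real.exp_le_exp.mpr hx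
  have hmono : (P {x | r ≤ c * ∑ i, (x i) ^ 2}).toReal ≤ (P {x | Real.exp r ≤ f x}).toReal := by
    refine ENNReal.toReal_mono (measure_ne_top _ _) (measure_mono hsub)
  have hI : ∫ x, f x ∂P = ((Real.sqrt (1 - 2 * (v:ℝ) * c))⁻¹) ^ M := by
    have h2 := pi_integral_pow (gaussianReal 0 v) (fun y => Real.exp (c * y ^ 2)) M
    rw [gaussian_mgf_integral v hv c hc] at h2
    exact h2
  refine hmono.trans ?_
  rw [Real.exp_neg]
  calc (P {x | Real.exp r ≤ f x}).toReal ≤ (∫ x, f x ∂P) / Real.exp r :=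
        (le_div_iff₀' (Real.exp_pos r)).mpr markov
    _ = (Real.exp r)⁻¹ * ((Real.sqrt (1 - 2 * (v:ℝ) * c))⁻¹) ^ M := by
        rw [hI, div_eq_inv_mul]

/-- The total variation distance between the standard Gaussian `N(0, I_M)` and
`N(0, (1+λ)I_M)` on `ℝ^M` tends to `1` as `M → ∞`, for fixed `λ > 0`.  Total
variation is expressed via the sup over measurable sets. -/
theorem stmt_18 (l : ℝ) (hl : 0 < l) :
    Filter.Tendsto
      (fun M : ℕ =>
        ⨆ (A : Set (Fin M → ℝ)) (_ : MeasurableSet A),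
          |((Measure.pi fun _ : Fin M => gaussianReal 0 1) A).toReal
            - ((Measure.pi fun _ : Fin M => gaussianReal 0 (1 + l).toNNReal) A).toReal|)
      Filter.atTop (nhds 1) := by
  -- constants
  set v : ℝ := 1 + l with hvdef
  set a : ℝ := 1 + l / 2 with hadef
  have ha : 1 < a := by rw [hadef]; linarith
  have hav : a < v := by rw [hadef, hvdef]; linarith
  have hapos : 0 < a := by linarith
  have hvpos : 0 < v := by linarith
  set s : ℝ := (a - 1) / (4 * a) with hsdef
  set t : ℝ := (v - a) / (4 * a * v) with htdef
  have hs : 0 < s := by rw [hsdef]; exact div_pos (by linarith) (by linarith)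
  have ht : 0 < t := by
    rw [htdef]
    exact div_pos (by linarith) (mul_pos (by linarith) hvpos)
  have hsval : 4 * a * s = a - 1 := by rw [hsdef]; field_simp
  have htval : 4 * a * v * t = v - a := by rw [htdef]; field_simp
  have hs2 : 0 < 1 - 2 * s := by nlinarith [hsval, hapos, ha]
  have h2ta : 0 < 1 - 2 * t * a := by nlinarith [htval, hvpos, hapos, hav]
  have htv : 0 < 1 + 2 * t * v := by nlinarith [ht, hvpos]
  set ρ1 : ℝ := Real.exp (-(s * a)) * (Real.sqrt (1 - 2 * s))⁻¹ with hρ1def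
  set ρ2 : ℝ := Real.exp (t * a) * (Real.sqrt (1 + 2 * t * v))⁻¹ with hρ2def
  have hρ1nonneg : 0 ≤ ρ1 := by positivity
  have hρ2nonneg : 0 ≤ ρ2 := by positivity
  -- ρ1 < 1
  have hρ1lt : ρ1 < 1 := by
    have hkey : Real.exp (-(2 * s * a)) < 1 - 2 * s := by
      have h1 : 1 + 2 * s * a ≤ Real.exp (2 * s * a) := by
        have := Real.add_one_le_exp (2 * s * a); linarith
      have hpos : (0:ℝ) < 1 + 2 * s * a := by nlinarith [hs, hapos]
      have h3 : (Real.exp (2 * s * a))⁻¹ ≤ (1 + 2 * s * a)⁻¹ := inv_anti₀ hpos h1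
      have h4 : (1 + 2 * s * a)⁻¹ < 1 - 2 * s := by
        rw [inv_eq_one_div, div_lt_iff₀ hpos]
        nlinarith [hsval, mul_pos hs (sub_pos.mpr ha)]
      calc Real.exp (-(2 * s * a)) = (Real.exp (2 * s * a))⁻¹ := Real.exp_neg _
        _ ≤ (1 + 2 * s * a)⁻¹ := h3
        _ < 1 - 2 * s := h4
    have hsq : Real.exp (-(s * a)) < Real.sqrt (1 - 2 * s) := by
      rw [Real.lt_sqrt (Real.exp_pos _).le]
      calc Real.exp (-(s * a)) ^ 2 = Real.exp (-(2 * s * a)) := by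
            rw [sq, ← Real.exp_add]; ring_nf
        _ < 1 - 2 * s := hkey
    have hsqrtpos : 0 < Real.sqrt (1 - 2 * s) := Real.sqrt_pos.mpr hs2
    calc ρ1 < Real.sqrt (1 - 2 * s) * (Real.sqrt (1 - 2 * s))⁻¹ :=
          mul_lt_mul_of_pos_right hsq (inv_pos.mpr hsqrtpos)
      _ = 1 := mul_inv_cancel₀ hsqrtpos.ne'
  -- ρ2 < 1
  have hρ2lt : ρ2 < 1 := by
    have hkey : Real.exp (2 * t * a) < 1 + 2 * t * v := by
      have h1 : 1 - 2 * t * a ≤ Real.exp (-(2 * t * a)) := by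
        have := Real.add_one_le_exp (-(2 * t * a)); linarith
      have h2 : Real.exp (2 * t * a) ≤ (1 - 2 * t * a)⁻¹ := by
        rw [← inv_inv (Real.exp (2 * t * a))]
        refine inv_anti₀ h2ta ?_
        rw [← Real.exp_neg]
        exact h1
      have h3 : (1 - 2 * t * a)⁻¹ < 1 + 2 * t * v := by
        rw [inv_eq_one_div, div_lt_iff₀ h2ta]
        nlinarith [htval, mul_pos ht (sub_pos.mpr hav)]
      exact h2.trans_lt h3
    have hsq : Real.exp (t * a) < Real.sqrt (1 + 2 * t * v) := by
      rw [Real.lt_sqrt (Real.exp_pos _).le]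
      calc Real.exp (t * a) ^ 2 = Real.exp (2 * t * a) := by
            rw [sq, ← Real.exp_add]; ring_nf
        _ < 1 + 2 * t * v := hkey
    have hsqrtpos : 0 < Real.sqrt (1 + 2 * t * v) := Real.sqrt_pos.mpr htv
    calc ρ2 < Real.sqrt (1 + 2 * t * v) * (Real.sqrt (1 + 2 * t * v))⁻¹ :=
          mul_lt_mul_of_pos_right hsq (inv_pos.mpr hsqrtpos)
      _ = 1 := mul_inv_cancel₀ hsqrtpos.ne'
  -- notation for the TV term
  set F : (M : ℕ) → Set (Fin M → ℝ) → ℝ := fun M A =>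
    |((Measure.pi fun _ : Fin M => gaussianReal 0 1) A).toReal
      - ((Measure.pi fun _ : Fin M => gaussianReal 0 (1 + l).toNNReal) A).toReal| with hFdef
  have habs : ∀ (M : ℕ) (A : Set (Fin M → ℝ)), F M A ≤ 1 := by
    intro M A
    have hp : ((Measure.pi fun _ : Fin M => gaussianReal 0 1) A).toReal ≤ 1 := by
      simpa using ENNReal.toReal_mono ENNReal.one_ne_top (prob_le_one (α := Fin M → ℝ))
    have hq : ((Measure.pi fun _ : Fin M => gaussianReal 0 (1 + l).toNNReal) A).toReal ≤ 1 := by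
      simpa using ENNReal.toReal_mono ENNReal.one_ne_top (prob_le_one (α := Fin M → ℝ))
    have hp0 : 0 ≤ ((Measure.pi fun _ : Fin M => gaussianReal 0 1) A).toReal :=
      ENNReal.toReal_nonneg
    have hq0 : 0 ≤ ((Measure.pi fun _ : Fin M => gaussianReal 0 (1 + l).toNNReal) A).toReal :=
      ENNReal.toReal_nonneg
    rw [hFdef, abs_sub_le_iff]
    constructor <;> linarith
  -- the key lower bound
  have hkey : ∀ M : ℕ, 1 - ρ1 ^ M - ρ2 ^ M ≤
      ⨆ (A : Set (Fin M → ℝ)) (_ : MeasurableSet A), F M A := by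
    intro M
    set P := Measure.pi fun _ : Fin M => gaussianReal 0 1 with hPdef
    set Q := Measure.pi fun _ : Fin M => gaussianReal 0 (1 + l).toNNReal with hQdef
    set A : Set (Fin M → ℝ) := {x | ∑ i, (x i) ^ 2 < a * M} with hAdef
    have hA : MeasurableSet A := by
      have hm : Measurable fun x : Fin M → ℝ => ∑ i, (x i) ^ 2 := by
        exact Finset.measurable_sum _ fun i _ => (measurable_pi_apply i).pow_const 2
      exact measurableSet_lt hm measurable_const
    -- bound on P Aᶜ
    have hP1 : (P Aᶜ).toReal ≤ ρ1 ^ M := by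
      have hc1 : 2 * ((1:ℝ≥0):ℝ) * s < 1 := by
        rw [NNReal.coe_one]; linarith
      have hch := gaussian_chernoff 1 one_ne_zero s (s * (a * M)) hc1 M
      have hsetEq : {x : Fin M → ℝ | s * (a * M) ≤ s * ∑ i, (x i) ^ 2} = Aᶜ := by
        ext x
        simp only [Set.mem_setOf_eq, Set.mem_compl_iff, hAdef, not_lt]
        exact mul_le_mul_iff_right₀ hs
      rw [hsetEq] at hch
      calc (P Aᶜ).toReal ≤ Real.exp (-(s * (a * M))) * ((Real.sqrt (1 - 2 * ((1:ℝ≥0):ℝ) * s))⁻¹) ^ M := hch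
        _ = ρ1 ^ M := by
            rw [NNReal.coe_one, show -(s * (a * (M:ℝ))) = (M:ℝ) * (-(s * a)) by ring,
              Real.exp_nat_mul, hρ1def, mul_pow]
            ring_nf
    -- bound on Q A
    have hQ1 : (Q A).toReal ≤ ρ2 ^ M := by
      set v2 : ℝ≥0 := (1 + l).toNNReal with hv2def
      have hv2c : (v2 : ℝ) = v := by
        rw [hv2def, Real.coe_toNNReal _ (by linarith : (0:ℝ) ≤ 1 + l), hvdef]
      have hv2 : v2 ≠ 0 := by
        intro h
        rw [h] at hv2c
        simp at hv2c
        linarith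
      have hc2 : 2 * (v2:ℝ) * (-t) < 1 := by
        rw [hv2c]; nlinarith [ht, hvpos]
      have hch := gaussian_chernoff v2 hv2 (-t) (-(t * (a * M))) hc2 M
      have hsub : A ⊆ {x : Fin M → ℝ | -(t * (a * M)) ≤ (-t) * ∑ i, (x i) ^ 2} := by
        intro x hx
        simp only [Set.mem_setOf_eq] at hx ⊢
        have : t * ∑ i, (x i) ^ 2 ≤ t * (a * M) :=
          mul_le_mul_of_nonneg_left hx.le ht.le
        linarith
      have hmono : (Q A).toReal ≤
          (Q {x : Fin M → ℝ | -(t * (a * M)) ≤ (-t) * ∑ i, (x i) ^ 2}).toReal :=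
        ENNReal.toReal_mono (measure_ne_top _ _) (measure_mono hsub)
      calc (Q A).toReal ≤ _ := hmono
        _ ≤ Real.exp (-(-(t * (a * M)))) * ((Real.sqrt (1 - 2 * (v2:ℝ) * (-t)))⁻¹) ^ M := hch
        _ = ρ2 ^ M := by
            rw [hv2c, neg_neg, show (1 : ℝ) - 2 * v * (-t) = 1 + 2 * t * v by ring,
              show t * (a * (M:ℝ)) = (M:ℝ) * (t * a) by ring, Real.exp_nat_mul, hρ2def, mul_pow]
    -- P A is large
    have hPA : 1 - ρ1 ^ M ≤ (P A).toReal := by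
      have hsum := prob_add_prob_compl (μ := P) hA
      have : (P A).toReal + (P Aᶜ).toReal = 1 := by
        rw [← ENNReal.toReal_add (measure_ne_top _ _) (measure_ne_top _ _), hsum]
        simp
      linarith
    -- assemble
    have hterm : 1 - ρ1 ^ M - ρ2 ^ M ≤ F M A := by
      have : (P A).toReal - (Q A).toReal ≤ F M A := by
        rw [hFdef]
        exact le_abs_self _
      linarith
    have hbdd : BddAbove (Set.range fun B : Set (Fin M → ℝ) =>
        ⨆ (_ : MeasurableSet B), F M B) := by
      refine ⟨1, ?_⟩
      rintro y ⟨B, rfl⟩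
      exact Real.iSup_le (fun _ => habs M B) zero_le_one
    calc 1 - ρ1 ^ M - ρ2 ^ M ≤ F M A := hterm
      _ = ⨆ (_ : MeasurableSet A), F M A := (ciSup_pos (f := fun _ : MeasurableSet A => F M A) hA).symm
      _ ≤ ⨆ (B : Set (Fin M → ℝ)) (_ : MeasurableSet B), F M B := le_ciSup hbdd A
  -- upper bound
  have hupper : ∀ M : ℕ, (⨆ (A : Set (Fin M → ℝ)) (_ : MeasurableSet A), F M A) ≤ 1 := by
    intro M
    exact Real.iSup_le (fun B => Real.iSup_le (fun _ => habs M B) zero_le_one) zero_le_one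
  -- squeeze
  have hL : Filter.Tendsto (fun M : ℕ => 1 - ρ1 ^ M - ρ2 ^ M) Filter.atTop (nhds 1) := by
    have h1 := tendsto_pow_atTop_nhds_zero_of_lt_one hρ1nonneg hρ1lt
    have h2 := tendsto_pow_atTop_nhds_zero_of_lt_one hρ2nonneg hρ2lt
    have := (tendsto_const_nhds (x := (1:ℝ)) (f := Filter.atTop (α := ℕ))).sub h1 |>.sub h2
    simpa using this
  exact tendsto_of_tendsto_of_tendsto_of_le_of_le hL tendsto_const_nhds
    (fun M => hkey M) (fun M => hupper M)
end
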